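/- Let n = sm + s − ℓ, and suppose F ⊆ 2^[n] has no s pairwise disjoint members and contains pairwise disjoint sets F_1,...,F_k with k ≤ ℓ and Σ|F_i| ≤ km + k − ℓ. Then the number of (m+1)-subsets of [n] not in F is at least C((m+1)(s−ℓ) − 1, m). -/

import Mathlib

open Finset

/-- `F` has no `s` pairwise disjoint members. -/
def NoMatching (F : Finset (Finset ℕ)) (s : ℕ) : Prop :=
  ∀ M ⊆ F, (M : Set (Finset ℕ)).PairwiseDisjoint id → M.card < s


lemma choose_step (m r : ℕ) :
    ((r+1)*(m+1)).choose (m+1) = (r+1) * (((r+1)*(m+1) - 1).choose m) := by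
  have hN : (r+1)*(m+1) - 1 + 1 = (r+1)*(m+1) := by
    have : 0 < (r+1)*(m+1) := Nat.mul_pos (Nat.succ_pos r) (Nat.succ_pos m)
    omega
  have h := Nat.add_one_mul_choose_eq ((r+1)*(m+1) - 1) m
  rw [hN] at h
  apply Nat.eq_of_mul_eq_mul_right (Nat.succ_pos m)
  generalize hC : (((r+1)*(m+1) - 1).choose m) = C at h ⊢
  simp only [Nat.succ_eq_add_one]
  rw [← h]; ring

lemma avg (m r : ℕ) (Y : Finset ℕ) (D : Finset (Finset ℕ))
    (hY : Y.card = (r+1+1) * (m+1)) (hD : D ⊆ Y.powersetCard (m+1))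
    (hDc : D.card < ((r+1+1)*(m+1) - 1).choose m) :
    ∃ A ∈ Y.powersetCard (m+1) \ D,
      (D ∩ (Y \ A).powersetCard (m+1)).card < ((r+1)*(m+1) - 1).choose m := by
  by_contra hcon
  push_neg at hcon
  set c := ((r+1)*(m+1) - 1).choose m with hc
  set C1 := ((r+1+1)*(m+1) - 1).choose m with hC1
  have hcard2 : (r+1+1) * (m+1) - (m+1) = (r+1) * (m+1) := by
    have : (r+1+1)*(m+1) = (r+1)*(m+1) + (m+1) := by ring
    omega
  have hswap : ∑ A ∈ Y.powersetCard (m+1), (D ∩ (Y \ A).powersetCard (m+1)).card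
      = ∑ B ∈ D, ((Y \ B).powersetCard (m+1)).card := by
    calc ∑ A ∈ Y.powersetCard (m+1), (D ∩ (Y \ A).powersetCard (m+1)).card
        = ∑ A ∈ Y.powersetCard (m+1), ∑ B ∈ D,
            (if B ∈ (Y \ A).powersetCard (m+1) then 1 else 0) := by
          refine Finset.sum_congr rfl fun A _ => ?_
          rw [← Finset.filter_mem_eq_inter, Finset.card_filter]
      _ = ∑ B ∈ D, ∑ A ∈ Y.powersetCard (m+1),
            (if B ∈ (Y \ A).powersetCard (m+1) then 1 else 0) := Finset.sum_comm
      _ = ∑ B ∈ D, ((Y \ B).powersetCard (m+1)).card := by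
          refine Finset.sum_congr rfl fun B hB => ?_
          rw [← Finset.card_filter]
          congr 1
          ext A
          obtain ⟨hBY, hBc⟩ := Finset.mem_powersetCard.mp (hD hB)
          simp only [Finset.mem_filter, Finset.mem_powersetCard]
          constructor
          · rintro ⟨⟨hAY, hAc⟩, hBYA, _⟩
            exact ⟨fun x hx => Finset.mem_sdiff.mpr ⟨hAY hx,
              fun hxB => (Finset.mem_sdiff.mp (hBYA hxB)).2 hx⟩, hAc⟩
          · rintro ⟨hAYB, hAc⟩
            exact ⟨⟨fun x hx => (Finset.mem_sdiff.mp (hAYB hx)).1, hAc⟩,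
              ⟨fun x hx => Finset.mem_sdiff.mpr ⟨hBY hx,
                fun hxA => (Finset.mem_sdiff.mp (hAYB hxA)).2 hx⟩, hBc⟩⟩
  have hcount : ∀ B ∈ D, ((Y \ B).powersetCard (m+1)).card = (r+1) * c := by
    intro B hB
    obtain ⟨hBY, hBc⟩ := Finset.mem_powersetCard.mp (hD hB)
    rw [Finset.card_powersetCard, Finset.card_sdiff_of_subset hBY, hY, hBc, hcard2]
    exact choose_step m r
  have hsum_eq : ∑ A ∈ Y.powersetCard (m+1), (D ∩ (Y \ A).powersetCard (m+1)).card
      = D.card * ((r+1) * c) := by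
    rw [hswap, Finset.sum_congr rfl hcount, Finset.sum_const, smul_eq_mul]
  have hPcard : (Y.powersetCard (m+1)).card = (r+1+1) * C1 := by
    rw [Finset.card_powersetCard, hY]; exact choose_step m (r+1)
  have hlow : ((r+1+1) * C1 - D.card) * c
      ≤ ∑ A ∈ Y.powersetCard (m+1), (D ∩ (Y \ A).powersetCard (m+1)).card := by
    calc ((r+1+1) * C1 - D.card) * c
        = (Y.powersetCard (m+1) \ D).card * c := by rw [Finset.card_sdiff_of_subset hD, hPcard]
      _ = (Y.powersetCard (m+1) \ D).card • c := by rw [smul_eq_mul]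
      _ ≤ ∑ A ∈ Y.powersetCard (m+1) \ D, (D ∩ (Y \ A).powersetCard (m+1)).card :=
          Finset.card_nsmul_le_sum _ _ _ fun A hA => hcon A hA
      _ ≤ ∑ A ∈ Y.powersetCard (m+1), (D ∩ (Y \ A).powersetCard (m+1)).card :=
          Finset.sum_le_sum_of_subset Finset.sdiff_subset
  rw [hsum_eq] at hlow
  have hcpos : 0 < c := by
    apply Nat.choose_pos
    have : m + 1 ≤ (r+1) * (m+1) := Nat.le_mul_of_pos_left (m+1) (Nat.succ_pos r)
    omega
  have h1 : (r+1+1) * C1 - D.card ≤ D.card * (r+1) := by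
    apply Nat.le_of_mul_le_mul_right _ hcpos
    calc ((r+1+1) * C1 - D.card) * c ≤ D.card * ((r+1) * c) := hlow
      _ = D.card * (r+1) * c := by ring
  have h2 : (r+1+1) * C1 ≤ D.card * (r+1) + D.card := Nat.sub_le_iff_le_add.mp h1
  have h3 : D.card * (r+1) + D.card = D.card * (r+1+1) := by ring
  have h4 : D.card * (r+1+1) ≤ (C1 - 1) * (r+1+1) :=
    Nat.mul_le_mul_right _ (by omega)
  have h5 : (C1 - 1) * (r+1+1) = C1 * (r+1+1) - (r+1+1) := by
    rw [Nat.sub_mul, one_mul]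
  have h6 : C1 * (r+1+1) = (r+1+1) * C1 := mul_comm _ _
  have hpos : 0 < (r+1+1) * C1 := Nat.mul_pos (by omega) (by omega)
  have : (r+1+1) * C1 ≤ (r+1+1) * C1 - (r+1+1) := by
    rw [← h6, ← h5]; omega
  exact absurd this (Nat.not_le.mpr (Nat.sub_lt hpos (by omega)))

lemma key (m : ℕ) : ∀ (r : ℕ) (Y : Finset ℕ) (D : Finset (Finset ℕ)),
    Y.card = r * (m+1) → D ⊆ Y.powersetCard (m+1) →
    D.card < (r * (m+1) - 1).choose m →
    ∃ p : Fin r → Finset ℕ, (∀ i, p i ∈ Y.powersetCard (m+1) \ D) ∧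
      ∀ i j, i ≠ j → Disjoint (p i) (p j) := by
  intro r
  induction r with
  | zero => exact fun Y D _ _ _ => ⟨fun i => i.elim0, fun i => i.elim0, fun i => i.elim0⟩
  | succ r ih =>
    intro Y D hY hD hDc
    match r, ih with
    | 0, _ =>
      have hm : ((0+1) * (m+1) - 1).choose m = 1 := by simp
      have hD0 : D = ∅ := by
        rw [hm] at hDc
        exact Finset.card_eq_zero.mp (by omega)
      refine ⟨fun _ => Y, fun i => ?_, fun i j hij => absurd (by omega : i = j) hij⟩
      rw [hD0]
      simp only [Finset.sdiff_empty, Finset.mem_powersetCard]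
      exact ⟨Finset.Subset.refl _, by simpa using hY⟩
    | r + 1, ih =>
    have hstep : ∃ A ∈ Y.powersetCard (m+1) \ D,
        (D ∩ (Y \ A).powersetCard (m+1)).card < ((r+1)*(m+1) - 1).choose m :=
      avg m r Y D hY hD hDc
    obtain ⟨A, hAmem, hAsmall⟩ := hstep
    obtain ⟨hAY, hAD⟩ := Finset.mem_sdiff.mp hAmem
    obtain ⟨hAsub, hAcard⟩ := Finset.mem_powersetCard.mp hAY
    have hYA : (Y \ A).card = (r+1) * (m+1) := by
      rw [Finset.card_sdiff_of_subset hAsub, hY, hAcard]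
      have : (r+1+1)*(m+1) = (r+1)*(m+1) + (m+1) := by ring
      omega
    obtain ⟨q, hq1, hq2⟩ := ih (Y \ A) (D ∩ (Y \ A).powersetCard (m+1)) hYA
      Finset.inter_subset_right hAsmall
    have hqY : ∀ i, q i ⊆ Y \ A := fun i =>
      (Finset.mem_powersetCard.mp (Finset.mem_sdiff.mp (hq1 i)).1).1
    have hdisjA : ∀ j, Disjoint A (q j) := fun j =>
      Finset.disjoint_left.mpr fun x hxA hxq => (Finset.mem_sdiff.mp (hqY j hxq)).2 hxA
    refine ⟨Fin.cons A q, ?_, ?_⟩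
    · intro i
      refine Fin.cases ?_ ?_ i
      · simpa using hAmem
      · intro j
        simp only [Fin.cons_succ]
        obtain ⟨hj1, hj2⟩ := Finset.mem_sdiff.mp (hq1 j)
        refine Finset.mem_sdiff.mpr ⟨Finset.powersetCard_mono Finset.sdiff_subset hj1, ?_⟩
        exact fun hjD => hj2 (Finset.mem_inter.mpr ⟨hjD, hj1⟩)
    · intro i j hij
      rcases Fin.eq_zero_or_eq_succ i with rfl | ⟨i', rfl⟩ <;>
        rcases Fin.eq_zero_or_eq_succ j with rfl | ⟨j', rfl⟩
      · exact absurd rfl hij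
      · simpa using hdisjA j'
      · simpa using (hdisjA i').symm
      · simp only [Fin.cons_succ]
        exact hq2 i' j' (fun h => hij (by rw [h]))

/-- If `F ⊆ 2^[n]`, `n = sm + s - ℓ`, has no `s` pairwise disjoint members and
contains pairwise disjoint sets `F₁,…,F_k` with `k ≤ ℓ` and
`Σ|F_i| ≤ km + k - ℓ`, then at least `C((m+1)(s-ℓ)-1, m)` of the
`(m+1)`-subsets of `[n]` are not in `F`. -/
theorem stmt17 (n s m ℓ k : ℕ) (hls : ℓ ≤ s) (hn : n = s * m + s - ℓ)
    (F : Finset (Finset ℕ)) (hF : ∀ A ∈ F, A ⊆ Finset.Icc 1 n)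
    (hν : NoMatching F s)
    (G : Fin k → Finset ℕ) (hG : ∀ i, G i ∈ F)
    (hGinj : Function.Injective G)
    (hGd : ∀ i j, i ≠ j → Disjoint (G i) (G j))
    (hk : k ≤ ℓ) (hsum : ∑ i, (G i).card + ℓ ≤ k * m + k) :
    Nat.choose ((m + 1) * (s - ℓ) - 1) m
      ≤ (((Finset.Icc 1 n).powersetCard (m + 1)).filter (fun A => A ∉ F)).card := by
  by_contra hcon
  push_neg at hcon
  obtain ⟨r, hr⟩ : ∃ r, s = k + r := ⟨s - k, by omega⟩
  set U : Finset ℕ := Finset.univ.biUnion G with hU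
  have hUcard : U.card = ∑ i, (G i).card :=
    Finset.card_biUnion (fun i _ j _ hij => hGd i j hij)
  have hUsub : U ⊆ Finset.Icc 1 n :=
    Finset.biUnion_subset.mpr fun i _ => hF _ (hG i)
  have hXcard : r * (m+1) ≤ (Finset.Icc 1 n \ U).card := by
    have h1 : (Finset.Icc 1 n \ U).card = n - U.card := by
      rw [Finset.card_sdiff_of_subset hUsub, Nat.card_Icc]
      omega
    have h2 : U.card + ℓ ≤ k*m + k := by rw [hUcard]; exact hsum
    rw [hr, add_mul] at hn
    have h3 : r*(m+1) = r*m + r := by ring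
    have hUn : U.card ≤ n := le_trans (Finset.card_le_card hUsub) (by rw [Nat.card_Icc]; omega)
    set a := k*m with ha
    set b := r*m with hb
    omega
  obtain ⟨Y, hYX, hYcard⟩ := Finset.exists_subset_card_eq hXcard
  set D := (Y.powersetCard (m+1)).filter (fun A => A ∉ F) with hDdef
  have hDsubbig : D ⊆ ((Finset.Icc 1 n).powersetCard (m + 1)).filter (fun A => A ∉ F) :=
    Finset.filter_subset_filter _
      (Finset.powersetCard_mono (hYX.trans Finset.sdiff_subset))
  have hDcard : D.card < ((m + 1) * (s - ℓ) - 1).choose m :=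
    lt_of_le_of_lt (Finset.card_le_card hDsubbig) hcon
  have hmono : ((m + 1) * (s - ℓ) - 1).choose m ≤ (r * (m+1) - 1).choose m := by
    apply Nat.choose_le_choose
    have h1 : s - ℓ ≤ r := by omega
    have h2 : (m+1) * (s - ℓ) ≤ (m+1) * r := Nat.mul_le_mul_left _ h1
    have h3 : (m+1) * r = r * (m+1) := mul_comm _ _
    omega
  obtain ⟨p, hp, hpd⟩ := key m r Y D hYcard (Finset.filter_subset _ _)
    (lt_of_lt_of_le hDcard hmono)
  -- facts about p
  have hpY : ∀ i, p i ⊆ Y := fun i =>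
    (Finset.mem_powersetCard.mp (Finset.mem_sdiff.mp (hp i)).1).1
  have hpc : ∀ i, (p i).card = m + 1 := fun i =>
    (Finset.mem_powersetCard.mp (Finset.mem_sdiff.mp (hp i)).1).2
  have hpF : ∀ i, p i ∈ F := by
    intro i
    by_contra hnF
    exact (Finset.mem_sdiff.mp (hp i)).2
      (Finset.mem_filter.mpr ⟨(Finset.mem_sdiff.mp (hp i)).1, hnF⟩)
  have hpne : ∀ i, (p i).Nonempty := fun i =>
    Finset.card_pos.mp (by rw [hpc i]; omega)
  have hGU : ∀ i, G i ⊆ U := fun i => Finset.subset_biUnion_of_mem G (Finset.mem_univ i)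
  have hpU : ∀ i x, x ∈ p i → x ∉ U := fun i x hx =>
    (Finset.mem_sdiff.mp (hYX (hpY i hx))).2
  have hGp : ∀ i j, Disjoint (G i) (p j) := fun i j =>
    Finset.disjoint_left.mpr fun x hxG hxp => hpU j x hxp (hGU i hxG)
  have hGnep : ∀ i j, G i ≠ p j := by
    intro i j h
    obtain ⟨x, hx⟩ := hpne j
    exact hpU j x hx (hGU i (h ▸ hx))
  have hpinj : Function.Injective p := by
    intro i j hij
    by_contra hne
    have hd := hpd i j hne
    rw [hij] at hd
    have hemp : p j = ∅ := Finset.eq_empty_of_forall_notMem fun x hx =>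
      Finset.disjoint_left.mp hd hx hx
    have hc := hpc j
    rw [hemp, Finset.card_empty] at hc
    omega
  set M : Finset (Finset ℕ) := Finset.univ.image G ∪ Finset.univ.image p with hM
  have hMF : M ⊆ F := by
    apply Finset.union_subset <;> intro x hx <;>
      obtain ⟨i, _, rfl⟩ := Finset.mem_image.mp hx
    · exact hG i
    · exact hpF i
  have hdisjim : Disjoint (Finset.univ.image G) (Finset.univ.image p) := by
    rw [Finset.disjoint_left]
    intro x hxG hxp
    obtain ⟨i, _, rfl⟩ := Finset.mem_image.mp hxG
    obtain ⟨j, _, hj⟩ := Finset.mem_image.mp hxp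
    exact hGnep i j hj.symm
  have hMcard : M.card = k + r := by
    rw [Finset.card_union_of_disjoint hdisjim,
      Finset.card_image_of_injective _ hGinj, Finset.card_image_of_injective _ hpinj,
      Finset.card_univ, Finset.card_univ, Fintype.card_fin, Fintype.card_fin]
  have hMpd : (M : Set (Finset ℕ)).PairwiseDisjoint id := by
    intro x hx y hy hxy
    simp only [Finset.coe_union, Set.mem_union, Finset.mem_coe, hM] at hx hy
    have hx' := hx; have hy' := hy
    rcases hx with hx | hx <;> rcases hy with hy | hy <;>
      obtain ⟨i, _, rfl⟩ := Finset.mem_image.mp hx <;>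
      obtain ⟨j, _, rfl⟩ := Finset.mem_image.mp hy
    · exact hGd i j (fun h => hxy (by rw [h]))
    · exact hGp i j
    · exact (hGp j i).symm
    · exact hpd i j (fun h => hxy (by rw [h]))
  have := hν M hMF hMpd
  omega
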